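/- Relational soundness of QRC₁: if the sequent φ ⊢ ψ is derivable in QRC₁, then for every adequate relational model M, every world w of M, and every w-assignment g, if M, w ⊩^g φ then M, w ⊩^g ψ. -/

import Mathlib

namespace QRC1

/-- Strictly positive formulas of QRC₁ over a signature with constants `Cst`,
relation symbols `Rl`, and arity function `ar`.  Terms are either variables
(natural numbers, left) or constants (right). -/
inductive Fml (Cst Rl : Type) (ar : Rl → ℕ) : Type
  | top : Fml Cst Rl ar
  | rel (S : Rl) (ts : Fin (ar S) → ℕ ⊕ Cst) : Fml Cst Rl ar
  | and (φ ψ : Fml Cst Rl ar) : Fml Cst Rl ar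
  | dia (φ : Fml Cst Rl ar) : Fml Cst Rl ar
  | all (x : ℕ) (φ : Fml Cst Rl ar) : Fml Cst Rl ar

namespace Fml

variable {Cst Rl : Type} {ar : Rl → ℕ}

/-- Free variables of a formula. -/
def fv : Fml Cst Rl ar → Set ℕ
  | .top => ∅
  | .rel _ ts => {x | ∃ i, ts i = Sum.inl x}
  | .and φ ψ => fv φ ∪ fv ψ
  | .dia φ => fv φ
  | .all y φ => fv φ \ {y}

/-- A formula is closed when it has no free variables. -/
def Closed (φ : Fml Cst Rl ar) : Prop := φ.fv = ∅

/-- Constants occurring in a formula. -/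
def consts : Fml Cst Rl ar → Set Cst
  | .top => ∅
  | .rel _ ts => {c | ∃ i, ts i = Sum.inr c}
  | .and φ ψ => consts φ ∪ consts ψ
  | .dia φ => consts φ
  | .all _ φ => consts φ

/-- Substitution of a term for a variable, on terms. -/
def substT (x : ℕ) (t : ℕ ⊕ Cst) : ℕ ⊕ Cst → ℕ ⊕ Cst
  | .inl y => if y = x then t else .inl y
  | .inr c => .inr c

/-- `φ.subst x t` replaces all free occurrences of variable `x` in `φ` by the term `t`. -/
def subst : Fml Cst Rl ar → ℕ → (ℕ ⊕ Cst) → Fml Cst Rl ar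
  | .top, _, _ => .top
  | .rel S ts, x, t => .rel S (fun i => substT x t (ts i))
  | .and φ ψ, x, t => .and (φ.subst x t) (ψ.subst x t)
  | .dia φ, x, t => .dia (φ.subst x t)
  | .all y φ, x, t => if y = x then .all y φ else .all y (φ.subst x t)

/-- `FreeFor t x φ`: the term `t` is free for the variable `x` in `φ`, i.e. no
free occurrence of a variable of `t` becomes bound in `φ[x/t]`. -/
def FreeFor (t : ℕ ⊕ Cst) (x : ℕ) : Fml Cst Rl ar → Prop
  | .top => True
  | .rel _ _ => True
  | .and φ ψ => FreeFor t x φ ∧ FreeFor t x ψ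
  | .dia φ => FreeFor t x φ
  | .all y φ => x ∉ fv (Fml.all y φ) ∨ (t ≠ .inl y ∧ FreeFor t x φ)

/-- Modal depth. -/
def mdepth : Fml Cst Rl ar → ℕ
  | .top => 0
  | .rel _ _ => 0
  | .and φ ψ => max φ.mdepth ψ.mdepth
  | .dia φ => φ.mdepth + 1
  | .all _ φ => φ.mdepth

/-- Quantifier depth. -/
def udepth : Fml Cst Rl ar → ℕ
  | .top => 0
  | .rel _ _ => 0
  | .and φ ψ => max φ.udepth ψ.udepth
  | .dia φ => φ.udepth
  | .all _ φ => φ.udepth + 1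

/-- Number of distinct constants occurring in a formula. -/
noncomputable def cdepth (φ : Fml Cst Rl ar) : ℕ := φ.consts.ncard

/-- Size of a formula (for termination purposes). -/
def size : Fml Cst Rl ar → ℕ
  | .top => 1
  | .rel _ _ => 1
  | .and φ ψ => φ.size + ψ.size + 1
  | .dia φ => φ.size + 1
  | .all _ φ => φ.size + 1

theorem size_subst (φ : Fml Cst Rl ar) (x : ℕ) (t : ℕ ⊕ Cst) :
    (φ.subst x t).size = φ.size := by
  induction φ generalizing x t with
  | top => rfl
  | rel S ts => rfl
  | and φ ψ ihφ ihψ => simp [subst, size, ihφ, ihψ]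
  | dia φ ih => simp [subst, size, ih]
  | all y φ ih => by_cases h : y = x <;> simp [subst, h, size, ih]

/-- The closure of a formula under a set of constants `C`, where the
subformulas of `∀x φ` are all `φ[x/c]` for `c ∈ C`. -/
def cl (C : Set Cst) : Fml Cst Rl ar → Set (Fml Cst Rl ar)
  | .top => {.top}
  | .rel S ts => {.rel S ts, .top}
  | .and φ ψ => {.and φ ψ} ∪ φ.cl C ∪ ψ.cl C
  | .dia φ => {.dia φ} ∪ φ.cl C
  | .all x φ => {.all x φ} ∪ ⋃ c ∈ C, (φ.subst x (.inr c)).cl C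
termination_by φ => φ.size
decreasing_by all_goals (simp [size, size_subst]; try omega)

/-- Renaming of constants along a map `f` (used for signature extensions). -/
def mapC {Cst' : Type} (f : Cst → Cst') : Fml Cst Rl ar → Fml Cst' Rl ar
  | .top => .top
  | .rel S ts => .rel S (fun i => Sum.map id f (ts i))
  | .and φ ψ => .and (φ.mapC f) (ψ.mapC f)
  | .dia φ => .dia (φ.mapC f)
  | .all x φ => .all x (φ.mapC f)

/-- Simultaneous substitution of terms for variables. -/
def msubst (σ : ℕ → ℕ ⊕ Cst) : Fml Cst Rl ar → Fml Cst Rl ar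
  | .top => .top
  | .rel S ts => .rel S (fun i => match ts i with
      | .inl x => σ x
      | .inr c => .inr c)
  | .and φ ψ => .and (φ.msubst σ) (ψ.msubst σ)
  | .dia φ => .dia (φ.msubst σ)
  | .all x φ => .all x (φ.msubst (Function.update σ x (.inl x)))

/-- `φ^g`: replace every free variable `x` of `φ` by the constant `g x`. -/
def capp (g : ℕ → Cst) (φ : Fml Cst Rl ar) : Fml Cst Rl ar :=
  φ.msubst (fun x => .inr (g x))

end Fml

/-- The derivability relation `φ ⊢ ψ` of the calculus QRC₁. -/
inductive Der {Cst Rl : Type} {ar : Rl → ℕ} : Fml Cst Rl ar → Fml Cst Rl ar → Prop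
  | top (φ) : Der φ .top
  | refl (φ) : Der φ φ
  | andE1 (φ ψ) : Der (.and φ ψ) φ
  | andE2 (φ ψ) : Der (.and φ ψ) ψ
  | andI {φ ψ χ} : Der φ ψ → Der φ χ → Der φ (.and ψ χ)
  | cut {φ ψ χ} : Der φ ψ → Der ψ χ → Der φ χ
  | diaMono {φ ψ} : Der φ ψ → Der (.dia φ) (.dia ψ)
  | diaTrans (φ) : Der (.dia (.dia φ)) (.dia φ)
  | allI {φ ψ} (x) : Der φ ψ → x ∉ φ.fv → Der φ (.all x ψ)
  | allE {φ ψ} (x) (t : ℕ ⊕ Cst) : Der (φ.subst x t) ψ → Fml.FreeFor t x φ →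
      Der (.all x φ) ψ
  | inst {φ ψ} (x) (t : ℕ ⊕ Cst) : Der φ ψ → Fml.FreeFor t x φ → Fml.FreeFor t x ψ →
      Der (φ.subst x t) (ψ.subst x t)
  | genC {φ ψ} (x) (c : Cst) : Der (φ.subst x (.inr c)) (ψ.subst x (.inr c)) →
      c ∉ φ.consts → c ∉ ψ.consts → Der φ ψ

section Depths

variable {Cst Rl : Type} {ar : Rl → ℕ}

/-- Modal depth of a set of formulas (the supremum of the modal depths). -/
noncomputable def mdepthSet (Γ : Set (Fml Cst Rl ar)) : ℕ := sSup (Fml.mdepth '' Γ)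

/-- Quantifier depth of a set of formulas. -/
noncomputable def udepthSet (Γ : Set (Fml Cst Rl ar)) : ℕ := sSup (Fml.udepth '' Γ)

/-- Maximum number of distinct constants per formula in a set of formulas. -/
noncomputable def cdepthSet (Γ : Set (Fml Cst Rl ar)) : ℕ := sSup (Fml.cdepth '' Γ)

/-- Closure of a set of formulas under a set of constants. -/
def clSet (C : Set Cst) (Γ : Set (Fml Cst Rl ar)) : Set (Fml Cst Rl ar) :=
  ⋃ γ ∈ Γ, γ.cl C

/-- Conjunction of a finite list of formulas. -/
def conjList : List (Fml Cst Rl ar) → Fml Cst Rl ar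
  | [] => .top
  | φ :: L => .and φ (conjList L)

end Depths

/-- A pair `⟨p⁺, p⁻⟩` of sets of formulas. -/
structure Pair (Cst Rl : Type) (ar : Rl → ℕ) where
  pos : Set (Fml Cst Rl ar)
  neg : Set (Fml Cst Rl ar)

namespace Pair

variable {Cst Rl : Type} {ar : Rl → ℕ}

/-- All formulas of the pair are closed. -/
def ClosedP (p : Pair Cst Rl ar) : Prop := ∀ φ ∈ p.pos ∪ p.neg, φ.Closed

/-- Consistency: the conjunction of (finitely many formulas of) `p⁺` does not
derive any formula of `p⁻`. -/
def Consistent (p : Pair Cst Rl ar) : Prop :=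
  ∀ δ ∈ p.neg, ∀ L : List (Fml Cst Rl ar), (∀ χ ∈ L, χ ∈ p.pos) → ¬ Der (conjList L) δ

/-- `Φ`-maximality: every formula of `Φ` is in `p⁺` or in `p⁻`, and `p`
contains only formulas of `Φ`. -/
def MaximalIn (Φ : Set (Fml Cst Rl ar)) (p : Pair Cst Rl ar) : Prop :=
  (∀ χ ∈ Φ, χ ∈ p.pos ∨ χ ∈ p.neg) ∧ p.pos ∪ p.neg ⊆ Φ

/-- Fully witnessed: every negative universal has a constant witness. -/
def FullyWitnessed (p : Pair Cst Rl ar) : Prop :=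
  ∀ (x : ℕ) (φ : Fml Cst Rl ar), Fml.all x φ ∈ p.neg →
    ∃ c : Cst, φ.subst x (.inr c) ∈ p.neg

/-- `Φ`-maximal, consistent, fully witnessed (and closed) pair. -/
def MCW (Φ : Set (Fml Cst Rl ar)) (p : Pair Cst Rl ar) : Prop :=
  p.ClosedP ∧ p.MaximalIn Φ ∧ p.Consistent ∧ p.FullyWitnessed

end Pair

/-- The relation `R̂` between pairs. -/
def hatR {Cst Rl : Type} {ar : Rl → ℕ} (p q : Pair Cst Rl ar) : Prop :=
  (∀ φ : Fml Cst Rl ar, Fml.dia φ ∈ p.neg → φ ∈ q.neg ∧ Fml.dia φ ∈ q.neg) ∧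
  ∃ ψ : Fml Cst Rl ar, Fml.dia ψ ∈ p.pos ∧ Fml.dia ψ ∈ q.neg

/-- A relational model for QRC₁. -/
structure Model (Cst Rl : Type) (ar : Rl → ℕ) where
  W : Type
  R : W → W → Prop
  Dom : W → Type
  finDom : ∀ w, Finite (Dom w)
  η : ∀ w v, R w v → Dom w → Dom v
  I : ∀ w, Cst → Dom w
  J : ∀ w (S : Rl), Set (Fin (ar S) → Dom w)

namespace Model

variable {Cst Rl : Type} {ar : Rl → ℕ} (M : Model Cst Rl ar)

/-- Value of a term under a `w`-assignment. -/
def tval {w : M.W} (g : ℕ → M.Dom w) : ℕ ⊕ Cst → M.Dom w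
  | .inl x => g x
  | .inr c => M.I w c

/-- Kripke satisfaction `M, w ⊩^g φ`. -/
def Sat : (w : M.W) → (g : ℕ → M.Dom w) → Fml Cst Rl ar → Prop
  | _, _, .top => True
  | w, g, .rel S ts => (fun i => M.tval g (ts i)) ∈ M.J w S
  | w, g, .and φ ψ => Sat w g φ ∧ Sat w g ψ
  | w, g, .dia φ => ∃ (v : M.W) (h : M.R w v), Sat v (fun n => M.η w v h (g n)) φ
  | w, g, .all x φ => ∀ h : ℕ → M.Dom w, (∀ y, y ≠ x → h y = g y) → Sat w h φ

/-- Adequate models: transitive accessibility, transitive `η` functions, and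
concordant interpretation of constants. -/
structure Adequate : Prop where
  trans : Transitive M.R
  etaTrans : ∀ {w u v : M.W} (h1 : M.R w u) (h2 : M.R u v) (h3 : M.R w v),
    M.η w v h3 = M.η u v h2 ∘ M.η w u h1
  concord : ∀ {w u : M.W} (h : M.R w u) (c : Cst), M.I u c = M.η w u h (M.I w c)

/-- Constant domain: all worlds have the same domain. -/
def ConstantDomain : Prop := ∀ w v : M.W, M.Dom w = M.Dom v

end Model


section Soundness

variable {Cst Rl : Type} {ar : Rl → ℕ}

theorem Fml.subst_of_not_fv (φ : Fml Cst Rl ar) (x : ℕ) (t : ℕ ⊕ Cst)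
    (hx : x ∉ φ.fv) : φ.subst x t = φ := by
  induction φ with
  | top => rfl
  | rel S ts =>
    simp only [Fml.subst]
    congr 1; funext i
    cases h : ts i with
    | inl y =>
      simp only [Fml.substT]
      have : y ≠ x := by rintro rfl; exact hx ⟨i, h⟩
      simp [this]
    | inr c => rfl
  | and φ ψ ihφ ihψ =>
    simp only [Fml.fv, Set.mem_union, not_or] at hx
    simp [Fml.subst, ihφ hx.1, ihψ hx.2]
  | dia φ ih => simp only [Fml.fv] at hx; simp [Fml.subst, ih hx]
  | all y φ ih =>
    by_cases h : y = x
    · simp [Fml.subst, h]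
    · simp only [Fml.fv, Set.mem_diff, Set.mem_singleton_iff, not_and, not_not] at hx
      have hx' : x ∉ φ.fv := fun hm => h (hx hm).symm
      simp [Fml.subst, h, ih hx']

theorem Fml.freeFor_inr (c : Cst) (x : ℕ) (φ : Fml Cst Rl ar) :
    Fml.FreeFor (Sum.inr c) x φ := by
  induction φ with
  | top => trivial
  | rel S ts => trivial
  | and φ ψ ihφ ihψ => exact ⟨ihφ, ihψ⟩
  | dia φ ih => exact ih
  | all y φ ih => exact Or.inr ⟨by simp, ih⟩

theorem Model.tval_eta (M : Model Cst Rl ar) (hM : M.Adequate) {w v : M.W}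
    (h : M.R w v) (g : ℕ → M.Dom w) (t : ℕ ⊕ Cst) :
    M.tval (fun n => M.η w v h (g n)) t = M.η w v h (M.tval g t) := by
  cases t with
  | inl y => rfl
  | inr c => exact hM.concord h c

/-- Agreement lemma: satisfaction only depends on the values of the assignment
on the free variables. -/
theorem Model.sat_congr (M : Model Cst Rl ar) (φ : Fml Cst Rl ar) :
    ∀ (w : M.W) (g g' : ℕ → M.Dom w), (∀ x ∈ φ.fv, g x = g' x) →
      (M.Sat w g φ ↔ M.Sat w g' φ) := by
  induction φ with
  | top => intro w g g' _; simp [Model.Sat]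
  | rel S ts =>
    intro w g g' hgg'
    have : (fun i => M.tval g (ts i)) = fun i => M.tval g' (ts i) := by
      funext i
      cases h : ts i with
      | inl y => exact hgg' y ⟨i, h⟩
      | inr c => rfl
    simp [Model.Sat, this]
  | and φ ψ ihφ ihψ =>
    intro w g g' hgg'
    have h1 : ∀ x ∈ φ.fv, g x = g' x := fun x hx => hgg' x (Or.inl hx)
    have h2 : ∀ x ∈ ψ.fv, g x = g' x := fun x hx => hgg' x (Or.inr hx)
    simp only [Model.Sat]
    exact and_congr (ihφ w g g' h1) (ihψ w g g' h2)
  | dia φ ih =>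
    intro w g g' hgg'
    simp only [Model.Sat]
    refine exists_congr fun v => exists_congr fun h => ih v _ _ ?_
    intro x hx; rw [hgg' x hx]
  | all y φ ih =>
    intro w g g' hgg'
    simp only [Model.Sat]
    constructor
    · intro H h' hh'
      have := H (Function.update g y (h' y)) (by
        intro z hz; simp [Function.update_of_ne hz])
      refine (ih w _ _ ?_).mp this
      intro z hz
      by_cases hzy : z = y
      · subst hzy; simp
      · rw [Function.update_of_ne hzy, hgg' z ⟨hz, hzy⟩, hh' z hzy]
    · intro H h hh
      have := H (Function.update g' y (h y)) (by
        intro z hz; simp [Function.update_of_ne hz])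
      refine (ih w _ _ ?_).mpr this
      intro z hz
      by_cases hzy : z = y
      · subst hzy; simp
      · rw [Function.update_of_ne hzy, hh z hzy, hgg' z ⟨hz, hzy⟩]

/-- Substitution lemma. -/
theorem Model.sat_subst (M : Model Cst Rl ar) (hM : M.Adequate) (x : ℕ)
    (t : ℕ ⊕ Cst) (φ : Fml Cst Rl ar) (hf : Fml.FreeFor t x φ) :
    ∀ (w : M.W) (g : ℕ → M.Dom w),
      (M.Sat w g (φ.subst x t) ↔ M.Sat w (Function.update g x (M.tval g t)) φ) := by
  induction φ with
  | top => intro w g; simp [Fml.subst, Model.Sat]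
  | rel S ts =>
    intro w g
    have : (fun i => M.tval g (Fml.substT x t (ts i))) =
        fun i => M.tval (Function.update g x (M.tval g t)) (ts i) := by
      funext i
      cases h : ts i with
      | inl y =>
        by_cases hyx : y = x
        · subst hyx; simp [Fml.substT, Model.tval]
        · simp [Fml.substT, hyx, Model.tval, Function.update_of_ne hyx]
      | inr c => rfl
    simp only [Fml.subst, Model.Sat, this]
  | and φ ψ ihφ ihψ =>
    intro w g
    simp only [Fml.subst, Model.Sat]
    exact and_congr (ihφ hf.1 w g) (ihψ hf.2 w g)
  | dia φ ih =>
    intro w g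
    simp only [Fml.subst, Model.Sat]
    refine exists_congr fun v => exists_congr fun h => ?_
    rw [ih hf v _]
    have : Function.update (fun n => M.η w v h (g n)) x
        (M.tval (fun n => M.η w v h (g n)) t) =
        fun n => M.η w v h (Function.update g x (M.tval g t) n) := by
      funext n
      by_cases hnx : n = x
      · subst hnx; simp [M.tval_eta hM h g t]
      · simp [Function.update_of_ne hnx]
    rw [this]
  | all y φ ih =>
    intro w g
    by_cases hyx : y = x
    · subst hyx
      simp only [Fml.subst, if_pos rfl]
      refine M.sat_congr _ w _ _ ?_
      intro z hz
      rcases hz with ⟨_, hzy⟩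
      rw [Function.update_of_ne hzy]
    · simp only [Fml.subst, if_neg hyx]
      rcases hf with hnf | ⟨hty, hff⟩
      · -- x not free in ∀y φ, hence not free in φ
        simp only [Fml.fv, Set.mem_diff, Set.mem_singleton_iff, not_and, not_not] at hnf
        have hx' : x ∉ φ.fv := fun hm => hyx (hnf hm).symm
        rw [Fml.subst_of_not_fv φ x t hx']
        refine M.sat_congr _ w _ _ ?_
        intro z hz
        have hzx : z ≠ x := by rintro rfl; exact hx' hz.1
        rw [Function.update_of_ne hzx]
      · simp only [Model.Sat]
        have htval : ∀ h : ℕ → M.Dom w, (∀ z, z ≠ y → h z = g z) →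
            M.tval h t = M.tval g t := by
          intro h hh
          cases t with
          | inl u =>
            have huy : u ≠ y := by rintro rfl; exact hty rfl
            exact hh u huy
          | inr c => rfl
        constructor
        · intro H h' hh'
          have hagree : ∀ z, z ≠ y → Function.update h' x (g x) z = g z := by
            intro z hz
            by_cases hzx : z = x
            · subst hzx; simp
            · rw [Function.update_of_ne hzx, hh' z hz, Function.update_of_ne hzx]
          have hs := H (Function.update h' x (g x)) hagree
          have := (ih hff w (Function.update h' x (g x))).mp hs
          have heq : Function.update (Function.update h' x (g x)) x
              (M.tval (Function.update h' x (g x)) t) = h' := by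
            funext z
            by_cases hzx : z = x
            · rw [hzx, Function.update_self, htval _ hagree, hh' x (Ne.symm hyx),
                Function.update_self]
            · simp [Function.update_of_ne hzx]
          rwa [heq] at this
        · intro H h hh
          have hagree : ∀ z, z ≠ y → Function.update h x (M.tval g t) z =
              Function.update g x (M.tval g t) z := by
            intro z hz
            by_cases hzx : z = x
            · subst hzx; simp
            · rw [Function.update_of_ne hzx, Function.update_of_ne hzx, hh z hz]
          have hs := H (Function.update h x (M.tval g t)) hagree
          have heq : Function.update h x (M.tval h t) =
              Function.update h x (M.tval g t) := by
            rw [htval h hh]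
          rw [ih hff w h, heq]
          exact hs

open Classical in
/-- The generated submodel with a fresh copy of `w` at the root, where the
constant `c` is reinterpreted as `d` (pushed forward along `η`). -/
noncomputable def genModel (M : Model Cst Rl ar) (w : M.W) (d : M.Dom w)
    (c : Cst) : Model Cst Rl ar where
  W := Option {v : M.W // M.R w v}
  R a b := match a, b with
    | _, none => False
    | none, some _ => True
    | some u, some v => M.R u.1 v.1
  Dom a := M.Dom (a.elim w Subtype.val)
  finDom a := M.finDom _
  η a b h := match a, b, h with
    | none, some v, _ => M.η w v.1 v.2
    | some u, some v, h => M.η u.1 v.1 h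
  I a c' := if c' = c then
      (match a with
       | none => d
       | some v => M.η w v.1 v.2 d)
    else M.I (a.elim w Subtype.val) c'
  J a S := M.J (a.elim w Subtype.val) S

theorem genModel_I_ne (M : Model Cst Rl ar) (w : M.W) (d : M.Dom w) (c : Cst)
    (a : (genModel M w d c).W) {c' : Cst} (hc : c' ≠ c) :
    (genModel M w d c).I a c' = M.I (a.elim w Subtype.val) c' := by
  simp [genModel, hc]

theorem genModel_I_none (M : Model Cst Rl ar) (w : M.W) (d : M.Dom w) (c : Cst) :
    (genModel M w d c).I none c = d := by
  simp [genModel]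

theorem genModel_I_some (M : Model Cst Rl ar) (w : M.W) (d : M.Dom w) (c : Cst)
    (v : {v : M.W // M.R w v}) :
    (genModel M w d c).I (some v) c = M.η w v.1 v.2 d := by
  simp [genModel]

theorem genModel_adequate (M : Model Cst Rl ar) (hM : M.Adequate) (w : M.W)
    (d : M.Dom w) (c : Cst) : (genModel M w d c).Adequate := by
  constructor
  · rintro (_ | a) (_ | b) (_ | e) hab hbe
    · exact hab.elim
    · exact hab.elim
    · exact hbe.elim
    · trivial
    · exact hab.elim
    · exact hab.elim
    · exact hbe.elim
    · exact hM.trans hab hbe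
  · rintro (_ | a) (_ | b) (_ | e) h1 h2 h3
    · exact h1.elim
    · exact h1.elim
    · exact h2.elim
    · exact hM.etaTrans b.2 h2 e.2
    · exact h1.elim
    · exact h1.elim
    · exact h2.elim
    · exact hM.etaTrans h1 h2 h3
  · rintro (_ | a) (_ | b) h c'
    · exact h.elim
    · by_cases hc : c' = c
      · subst hc
        rw [genModel_I_some, genModel_I_none]
        rfl
      · exact (genModel_I_ne M w d c (some b) hc).trans ((hM.concord b.2 c').trans
          (congrArg (M.η w b.1 b.2) (genModel_I_ne M w d c none hc).symm))
    · exact h.elim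
    · by_cases hc : c' = c
      · subst hc
        rw [genModel_I_some, genModel_I_some]
        show M.η w b.1 b.2 d = M.η a.1 b.1 h (M.η w a.1 a.2 d)
        rw [hM.etaTrans a.2 h b.2]
        rfl
      · exact (genModel_I_ne M w d c (some b) hc).trans ((hM.concord h c').trans
          (congrArg (M.η a.1 b.1 h) (genModel_I_ne M w d c (some a) hc).symm))

theorem genModel_sat (M : Model Cst Rl ar) (hM : M.Adequate) (w : M.W)
    (d : M.Dom w) (c : Cst) (φ : Fml Cst Rl ar) (hc : c ∉ φ.consts) :
    ∀ (a : (genModel M w d c).W) (g : ℕ → (genModel M w d c).Dom a),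
      ((genModel M w d c).Sat a g φ ↔ M.Sat (a.elim w Subtype.val) g φ) := by
  induction φ with
  | top => intro a g; simp [Model.Sat]
  | rel S ts =>
    intro a g
    have : (fun i => (genModel M w d c).tval g (ts i)) =
        fun i => M.tval (g := g) (ts i) := by
      funext i
      cases h : ts i with
      | inl y => rfl
      | inr c' =>
        have hc' : c' ≠ c := by rintro rfl; exact hc ⟨i, h⟩
        simp [Model.tval, genModel, hc']
    simp only [Model.Sat]
    rw [this]
    exact Iff.rfl
  | and φ ψ ihφ ihψ =>
    intro a g
    simp only [Fml.consts, Set.mem_union, not_or] at hc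
    simp only [Model.Sat]
    exact and_congr (ihφ hc.1 a g) (ihψ hc.2 a g)
  | dia φ ih =>
    intro a g
    simp only [Fml.consts] at hc
    simp only [Model.Sat]
    constructor
    · rintro ⟨(_ | v), hb, hsat⟩
      · cases a <;> exact False.elim hb
      · cases a with
        | none =>
          exact ⟨v.1, v.2, (ih hc (some v) _).mp hsat⟩
        | some u =>
          exact ⟨v.1, hb, (ih hc (some v) _).mp hsat⟩
    · rintro ⟨v, hv, hsat⟩
      cases a with
      | none =>
        refine ⟨some ⟨v, hv⟩, trivial, (ih hc (some ⟨v, hv⟩) _).mpr hsat⟩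
      | some u =>
        refine ⟨some ⟨v, hM.trans u.2 hv⟩, hv, (ih hc (some ⟨v, hM.trans u.2 hv⟩) _).mpr hsat⟩
  | all y φ ih =>
    intro a g
    simp only [Fml.consts] at hc
    simp only [Model.Sat]
    exact forall_congr' fun h => imp_congr Iff.rfl (ih hc a h)

end Soundness

theorem relational_soundness (Cst Rl : Type) (ar : Rl → ℕ) (φ ψ : Fml Cst Rl ar)
    (h : Der φ ψ) :
    ∀ (M : Model Cst Rl ar), M.Adequate →
      ∀ (w : M.W) (g : ℕ → M.Dom w), M.Sat w g φ → M.Sat w g ψ := by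
  induction h with
  | top φ => intro M hM w g _; trivial
  | refl φ => intro M hM w g h; exact h
  | andE1 φ ψ => intro M hM w g h; exact h.1
  | andE2 φ ψ => intro M hM w g h; exact h.2
  | andI h1 h2 ih1 ih2 =>
    intro M hM w g h
    exact ⟨ih1 M hM w g h, ih2 M hM w g h⟩
  | cut h1 h2 ih1 ih2 =>
    intro M hM w g h
    exact ih2 M hM w g (ih1 M hM w g h)
  | diaMono h ih =>
    rintro M hM w g ⟨v, hv, hsat⟩
    exact ⟨v, hv, ih M hM v _ hsat⟩
  | diaTrans φ =>
    rintro M hM w g ⟨v, hv, u, hu, hsat⟩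
    refine ⟨u, hM.trans hv hu, ?_⟩
    have : (fun n => M.η w u (hM.trans hv hu) (g n)) =
        fun n => M.η v u hu (M.η w v hv (g n)) := by
      funext n
      rw [hM.etaTrans hv hu (hM.trans hv hu)]
      rfl
    rw [this]
    exact hsat
  | allI x h hx ih =>
    intro M hM w g hsat h' hh'
    refine ih M hM w h' ?_
    refine (M.sat_congr _ w g h' ?_).mp hsat
    intro z hz
    have hzx : z ≠ x := by rintro rfl; exact hx hz
    exact (hh' z hzx).symm
  | allE x t h hff ih =>
    intro M hM w g hsat
    have := hsat (Function.update g x (M.tval g t)) (by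
      intro z hz; rw [Function.update_of_ne hz])
    have hsub := (M.sat_subst hM x t _ hff w g).mpr this
    exact ih M hM w g hsub
  | inst x t h hffφ hffψ ih =>
    intro M hM w g hsat
    have := (M.sat_subst hM x t _ hffφ w g).mp hsat
    have := ih M hM w _ this
    exact (M.sat_subst hM x t _ hffψ w g).mpr this
  | @genC φ' ψ' x c h hcφ hcψ ih =>
    intro M hM w g hsat
    set M' := genModel M w (g x) c with hM'def
    have hM' : M'.Adequate := genModel_adequate M hM w (g x) c
    -- `g` is an assignment at the root world `none` of `M'`
    have hroot : M'.Sat none g φ' := (genModel_sat M hM w (g x) c φ' hcφ none g).mpr hsat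
    have htv : M'.tval (w := none) g (Sum.inr c) = g x :=
      genModel_I_none M w (g x) c
    have hsub : M'.Sat none g (φ'.subst x (Sum.inr c)) := by
      rw [M'.sat_subst hM' x (Sum.inr c) φ' (Fml.freeFor_inr c x φ') none g, htv]
      exact cast (congrArg (fun f : ℕ → M'.Dom none => M'.Sat none f φ')
        (Function.update_eq_self x g).symm) hroot
    have := ih M' hM' none g hsub
    have hψsub : M'.Sat none g ψ' := by
      rw [M'.sat_subst hM' x (Sum.inr c) ψ' (Fml.freeFor_inr c x ψ') none g, htv] at this
      exact cast (congrArg (fun f : ℕ → M'.Dom none => M'.Sat none f ψ')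
        (Function.update_eq_self x g)) this
    exact (genModel_sat M hM w (g x) c ψ' hcψ none g).mp hψsub


end QRC1
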